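/- arXiv:2509.05808 — 2 statements merged into one kernel-verified Lean document; each statement's English description precedes it below -/
import Mathlib

section
/- Let K¹ ⊆ Δ^{d¹} and K²ʲ ⊆ Δ^{d²ʲ} for j = 1,…,n be nonempty compact convex sets, and let W ∈ R^{n×d¹} be the identity-like aggregation (d¹ = n, W = I). Define K = { blkdiag(k²¹,…,k²ⁿ) · k¹ : k¹ ∈ K¹, k²ʲ ∈ K²ʲ }, where blkdiag(k²¹,…,k²ⁿ) stacks the vectors k²ʲ as diagonal blocks. Then K is convex. -/
/-- Convexity of the two-layer admissible set (with identity aggregation `W = I`):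
`K = { blkdiag(k²¹,…,k²ⁿ) · k¹ : k¹ ∈ K¹, k²ʲ ∈ K²ʲ }` is convex. -/
theorem admissible_set_convex (n : ℕ) (d : Fin n → ℕ)
    (K1 : Set (Fin n → ℝ)) (K2 : ∀ j : Fin n, Set (Fin (d j) → ℝ))
    (hK1sub : K1 ⊆ stdSimplex ℝ (Fin n))
    (hK2sub : ∀ j, K2 j ⊆ stdSimplex ℝ (Fin (d j)))
    (hK1ne : K1.Nonempty) (hK2ne : ∀ j, (K2 j).Nonempty)
    (hK1comp : IsCompact K1) (hK2comp : ∀ j, IsCompact (K2 j))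
    (hK1conv : Convex ℝ K1) (hK2conv : ∀ j, Convex ℝ (K2 j)) :
    Convex ℝ {x : (Σ j : Fin n, Fin (d j)) → ℝ |
      ∃ k1 ∈ K1, ∃ k2 : ∀ j : Fin n, Fin (d j) → ℝ,
        (∀ j, k2 j ∈ K2 j) ∧ x = fun p => k2 p.1 p.2 * k1 p.1} := by
  classical
  rintro x ⟨k1, hk1, k2, hk2, rfl⟩ y ⟨l1, hl1, l2, hl2, rfl⟩ a b ha hb hab
  have hk1n : ∀ j, 0 ≤ k1 j := fun j => (hK1sub hk1).1 j
  have hl1n : ∀ j, 0 ≤ l1 j := fun j => (hK1sub hl1).1 j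
  refine ⟨a • k1 + b • l1, hK1conv hk1 hl1 ha hb hab,
    fun j => if h : a * k1 j + b * l1 j = 0 then k2 j
      else (a * k1 j / (a * k1 j + b * l1 j)) • k2 j +
           (b * l1 j / (a * k1 j + b * l1 j)) • l2 j, ?_, ?_⟩
  · intro j
    by_cases h : a * k1 j + b * l1 j = 0
    · simpa [h] using hk2 j
    · simp only [dif_neg h]
      have hc : 0 ≤ a * k1 j := mul_nonneg ha (hk1n j)
      have hd : 0 ≤ b * l1 j := mul_nonneg hb (hl1n j)
      have hs : 0 < a * k1 j + b * l1 j := lt_of_le_of_ne (add_nonneg hc hd) (Ne.symm h)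
      exact hK2conv j (hk2 j) (hl2 j) (div_nonneg hc hs.le) (div_nonneg hd hs.le)
        (by field_simp)
  · funext p
    obtain ⟨j, i⟩ := p
    simp only [Pi.add_apply, Pi.smul_apply, smul_eq_mul]
    by_cases h : a * k1 j + b * l1 j = 0
    · have hc : 0 ≤ a * k1 j := mul_nonneg ha (hk1n j)
      have hd : 0 ≤ b * l1 j := mul_nonneg hb (hl1n j)
      have h1 : a * k1 j = 0 := by linarith
      have h2 : b * l1 j = 0 := by linarith
      rw [dif_pos h, h, mul_zero]
      linear_combination k2 j i * h1 + l2 j i * h2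
    · rw [dif_neg h]
      simp only [Pi.add_apply, Pi.smul_apply, smul_eq_mul]
      field_simp
end

section
/- Suppose the block-diagonal matrices K^i = blkdiag(k^{i,1},…,k^{i,n^i}) with k^{i,j} ∈ Δ^{d^{i,j}}, and aggregation matrices W^i that are entrywise nonnegative with 1ᵀW^i = 1ᵀ, and that the first-layer inequality (K¹ − T̄¹)ᵀ π̄¹ ≤ 0 and second-layer inequalities (K² − T̄²)ᵀ π̄² ⪯ 0 (entrywise) hold, where π̄¹ = (W¹)ᵀ(T̄²)ᵀ π̄². Then (K²W¹K¹ − T̄²W¹T̄¹)ᵀ π̄² ≤ 0 for all admissible K¹, K². -/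
/-- Combining the layer-1 and layer-2 rest-point inequalities with the payoff
back-propagation yields `(K²W¹K¹ − T̄²W¹T̄¹)ᵀ π̄² ≤ 0` for all admissible `K¹, K²`. -/
theorem two_layer_rest_point_ineq (n1 n2 : ℕ) (d : Fin n2 → ℕ)
    (W : Matrix (Fin n2) (Fin n1) ℝ)
    (hW0 : ∀ j i, 0 ≤ W j i) (hW1 : ∀ i, ∑ j, W j i = 1)
    (t1 : Fin n1 → ℝ) (ht1 : t1 ∈ stdSimplex ℝ (Fin n1))
    (t2 : ∀ j : Fin n2, Fin (d j) → ℝ) (ht2 : ∀ j, t2 j ∈ stdSimplex ℝ (Fin (d j)))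
    (π2 : (Σ j : Fin n2, Fin (d j)) → ℝ)
    (π1 : Fin n1 → ℝ)
    (hπ1 : π1 = fun i => ∑ j, W j i * ∑ l, t2 j l * π2 ⟨j, l⟩)
    (h1 : ∀ k1 ∈ stdSimplex ℝ (Fin n1), ∑ i, (k1 i - t1 i) * π1 i ≤ 0)
    (h2 : ∀ j : Fin n2, ∀ k2j ∈ stdSimplex ℝ (Fin (d j)),
      ∑ l, (k2j l - t2 j l) * π2 ⟨j, l⟩ ≤ 0) :
    ∀ k1 ∈ stdSimplex ℝ (Fin n1),
      ∀ k2 : ∀ j : Fin n2, Fin (d j) → ℝ, (∀ j, k2 j ∈ stdSimplex ℝ (Fin (d j))) →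
        ∑ q : Σ j : Fin n2, Fin (d j),
          (k2 q.1 q.2 * W.mulVec k1 q.1 - t2 q.1 q.2 * W.mulVec t1 q.1) * π2 q ≤ 0 := by
  intro k1 hk1 k2 hk2
  have hWk1 : ∀ j, 0 ≤ W.mulVec k1 j := fun j => by
    simpa [Matrix.mulVec, dotProduct] using
      Finset.sum_nonneg fun i (_ : i ∈ Finset.univ) => mul_nonneg (hW0 j i) (hk1.1 i)
  have key : ∑ q : Σ j : Fin n2, Fin (d j),
        (k2 q.1 q.2 * W.mulVec k1 q.1 - t2 q.1 q.2 * W.mulVec t1 q.1) * π2 q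
      = (∑ j, W.mulVec k1 j * ∑ l, (k2 j l - t2 j l) * π2 ⟨j, l⟩)
        + ∑ i, (k1 i - t1 i) * π1 i := by
    rw [← Finset.univ_sigma_univ, Finset.sum_sigma]
    have step : ∀ j : Fin n2, ∀ l : Fin (d j),
        (k2 j l * W.mulVec k1 j - t2 j l * W.mulVec t1 j) * π2 ⟨j, l⟩
        = W.mulVec k1 j * ((k2 j l - t2 j l) * π2 ⟨j, l⟩)
          + (W.mulVec k1 j - W.mulVec t1 j) * (t2 j l * π2 ⟨j, l⟩) := by
      intro j l; ring
    calc ∑ j, ∑ l, (k2 j l * W.mulVec k1 j - t2 j l * W.mulVec t1 j) * π2 ⟨j, l⟩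
        = ∑ j, ((W.mulVec k1 j * ∑ l, (k2 j l - t2 j l) * π2 ⟨j, l⟩)
            + (W.mulVec k1 j - W.mulVec t1 j) * ∑ l, t2 j l * π2 ⟨j, l⟩) := by
          refine Finset.sum_congr rfl fun j _ => ?_
          rw [Finset.mul_sum, Finset.mul_sum, ← Finset.sum_add_distrib]
          exact Finset.sum_congr rfl fun l _ => step j l
      _ = (∑ j, W.mulVec k1 j * ∑ l, (k2 j l - t2 j l) * π2 ⟨j, l⟩)
            + ∑ j, (W.mulVec k1 j - W.mulVec t1 j) * ∑ l, t2 j l * π2 ⟨j, l⟩ :=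
          Finset.sum_add_distrib
      _ = (∑ j, W.mulVec k1 j * ∑ l, (k2 j l - t2 j l) * π2 ⟨j, l⟩)
            + ∑ i, (k1 i - t1 i) * π1 i := by
          congr 1
          subst hπ1
          simp only [Matrix.mulVec, dotProduct]
          calc ∑ j, (∑ i, W j i * k1 i - ∑ i, W j i * t1 i) * ∑ l, t2 j l * π2 ⟨j, l⟩
              = ∑ j, ∑ i, (k1 i - t1 i) * (W j i * ∑ l, t2 j l * π2 ⟨j, l⟩) := by
                refine Finset.sum_congr rfl fun j _ => ?_
                rw [← Finset.sum_sub_distrib, Finset.sum_mul]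
                exact Finset.sum_congr rfl fun i _ => by ring
            _ = ∑ i, ∑ j, (k1 i - t1 i) * (W j i * ∑ l, t2 j l * π2 ⟨j, l⟩) :=
                Finset.sum_comm
            _ = ∑ i, (k1 i - t1 i) * ∑ j, W j i * ∑ l, t2 j l * π2 ⟨j, l⟩ := by
                refine Finset.sum_congr rfl fun i _ => ?_
                rw [Finset.mul_sum]
  rw [key]
  have hA : (∑ j, W.mulVec k1 j * ∑ l, (k2 j l - t2 j l) * π2 ⟨j, l⟩) ≤ 0 :=
    Finset.sum_nonpos fun j _ => mul_nonpos_of_nonneg_of_nonpos (hWk1 j)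
      (h2 j (k2 j) (hk2 j))
  have hB := h1 k1 hk1
  linarith
end
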